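/- For every positive integer n and all elements x, y of the group ring ℤ[ℚ/ℤ], one has ρ̃_n(x)·ρ̃_n(y) = n·ρ̃_n(x·y). -/

import Mathlib

open scoped Classical

/-- `ℚ/ℤ`, the quotient of the additive group of rationals by the integers. -/
abbrev QZ : Type := ℚ ⧸ AddSubgroup.zmultiples (1 : ℚ)

/-- The group ring `ℤ[ℚ/ℤ]`. -/
abbrev RQZ : Type := AddMonoidAlgebra ℤ QZ

/-- The basis element `e(γ)` of the group ring `ℤ[ℚ/ℤ]`. -/
noncomputable def e (γ : QZ) : RQZ := AddMonoidAlgebra.single γ 1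

/-- `σ` is the ring endomorphism of `ℤ[ℚ/ℤ]` determined by `σ(e γ) = e (n • γ)`. -/
def IsSigma (n : ℕ) (σ : RQZ →+* RQZ) : Prop :=
  ∀ γ : QZ, σ (e γ) = e (n • γ)

/-- `ρ` is the ℤ-linear map of `ℤ[ℚ/ℤ]` determined by
`ρ(e γ) = ∑_{n • γ' = γ} e γ'` (the sum over the fiber of multiplication by `n`). -/
def IsRho (n : ℕ) (ρ : RQZ →ₗ[ℤ] RQZ) : Prop :=
  ∀ γ : QZ, ρ (e γ) = ∑ᶠ γ' ∈ {γ' : QZ | n • γ' = γ}, e γ'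

lemma mk_eq_mk (a b : ℚ) : (a : QZ) = b ↔ ∃ m : ℤ, b - a = m := by
  rw [QuotientAddGroup.eq, AddSubgroup.mem_zmultiples_iff]
  constructor
  · rintro ⟨k, h⟩; simp only [zsmul_eq_mul, mul_one] at h; exact ⟨k, by linarith⟩
  · rintro ⟨k, h⟩; exact ⟨k, by rw [zsmul_eq_mul, mul_one]; linarith⟩

lemma e_mul (γ δ : QZ) : e γ * e δ = e (γ + δ) := by
  simp [e, AddMonoidAlgebra.single_mul_single]

lemma fiber_eq (n : ℕ) (hn : 0 < n) (q : ℚ) :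
    {γ' : QZ | n • γ' = (q : QZ)} =
      ↑((Finset.range n).image fun k : ℕ => (((q + k)/n : ℚ) : QZ)) := by
  have hn' : (n : ℚ) ≠ 0 := by positivity
  ext γ'
  induction γ' using QuotientAddGroup.induction_on with
  | H r =>
    simp only [Set.mem_setOf_eq, Finset.coe_image, Set.mem_image, Finset.mem_coe,
      Finset.mem_range]
    constructor
    · intro h
      have h' : ((n • r : ℚ) : QZ) = (q : QZ) := h
      obtain ⟨m, hm⟩ := (mk_eq_mk _ _).mp h'
      have h1 : (0:ℤ) ≤ (-m) % n := Int.emod_nonneg _ (by exact_mod_cast hn.ne')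
      have h3 : ((((-m) % n).toNat : ℤ)) = (-m) % n := Int.toNat_of_nonneg h1
      refine ⟨((-m) % n).toNat, ?_, ?_⟩
      · have h2 : (-m) % n < n := Int.emod_lt_of_pos _ (by exact_mod_cast hn)
        omega
      · rw [eq_comm, mk_eq_mk]
        have hdvd : (n:ℤ) ∣ m + ((-m) % n).toNat := by
          rw [h3, Int.emod_def]; exact ⟨-((-m)/n), by ring⟩
        obtain ⟨c, hc⟩ := hdvd
        refine ⟨c, ?_⟩
        have hcq : (m:ℚ) + ((((-m) % n).toNat : ℕ) : ℚ) = (n:ℚ) * c := by exact_mod_cast hc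
        have hm' : q - n • r = m := hm
        rw [nsmul_eq_mul] at hm'
        field_simp
        linarith
    · rintro ⟨k, hk, hr⟩
      rw [← hr]
      show ((n • ((q + k)/n) : ℚ) : QZ) = (q : QZ)
      rw [mk_eq_mk, nsmul_eq_mul]
      refine ⟨-k, ?_⟩
      push_cast
      field_simp
      ring

lemma inj_on_range (n : ℕ) (hn : 0 < n) (q : ℚ) :
    Set.InjOn (fun k : ℕ => (((q + k)/n : ℚ) : QZ)) (Finset.range n) := by
  have hn' : (n : ℚ) ≠ 0 := by positivity
  intro k hk j hj h
  simp only [Finset.coe_range, Set.mem_Iio] at hk hj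
  obtain ⟨m, hm⟩ := (mk_eq_mk _ _).mp h
  have h2 : (j:ℚ) - k = n * m := by field_simp at hm; linarith
  have h3 : (j:ℤ) - k = n * m := by exact_mod_cast h2
  have hj' : (j:ℤ) < n := by exact_mod_cast hj
  have hk' : (k:ℤ) < n := by exact_mod_cast hk
  have hm0 : m = 0 := by nlinarith [Int.ofNat_nonneg j, Int.ofNat_nonneg k]
  rw [hm0, mul_zero] at h3
  omega

noncomputable def F (n : ℕ) (c : ℚ) : RQZ := ∑ i ∈ Finset.range n, e (((c + i)/n : ℚ) : QZ)

lemma rho_apply (n : ℕ) (hn : 0 < n) (ρn : RQZ →ₗ[ℤ] RQZ)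
    (hρn : ∀ γ : QZ, ρn (e γ) = ∑ᶠ γ' ∈ {γ' : QZ | n • γ' = γ}, e γ') (q : ℚ) :
    ρn (e (q : QZ)) = F n q := by
  rw [hρn, fiber_eq n hn q, finsum_mem_coe_finset, Finset.sum_image]
  · rfl
  · intro k hk j hj h; exact inj_on_range n hn q (by simpa using hk) (by simpa using hj) h

lemma F_shift (n : ℕ) (hn : 0 < n) (c : ℚ) : F n (c + 1) = F n c := by
  have hn' : (n : ℚ) ≠ 0 := by positivity
  have key : ∀ i : ℕ, e (((c + 1 + i)/n : ℚ) : QZ) = e (((c + (i+1:ℕ))/n : ℚ) : QZ) := by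
    intro i; congr 2; push_cast; ring
  have h0 : e (((c + (n:ℕ))/n : ℚ) : QZ) = e (((c + (0:ℕ))/n : ℚ) : QZ) := by
    congr 1
    rw [eq_comm, mk_eq_mk]
    refine ⟨1, ?_⟩; push_cast; field_simp; ring
  have := Finset.sum_range_succ' (fun i => e (((c + i)/n : ℚ) : QZ)) n
  have h2 := Finset.sum_range_succ (fun i => e (((c + i)/n : ℚ) : QZ)) n
  unfold F
  simp only [key]
  rw [this] at h2
  simp only [h0] at h2
  exact add_right_cancel h2

lemma F_shift_nat (n : ℕ) (hn : 0 < n) (c : ℚ) (k : ℕ) : F n (c + k) = F n c := by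
  induction k with
  | zero => simp
  | succ k ih => rw [← ih, ← F_shift n hn (c + k)]; norm_num; ring_nf

lemma key_basis (n : ℕ) (hn : 0 < n) (ρn : RQZ →ₗ[ℤ] RQZ) (hρn : IsRho n ρn)
    (γ δ : QZ) : ρn (e γ) * ρn (e δ) = n • ρn (e γ * e δ) := by
  have hn' : (n : ℚ) ≠ 0 := by positivity
  induction γ using QuotientAddGroup.induction_on with
  | H q =>
  induction δ using QuotientAddGroup.induction_on with
  | H p =>
  have hadd : ((q : QZ) + (p : QZ)) = ((q + p : ℚ) : QZ) := rfl
  rw [e_mul, hadd, rho_apply n hn ρn hρn, rho_apply n hn ρn hρn, rho_apply n hn ρn hρn]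
  unfold F
  rw [Finset.sum_mul_sum]
  have hterm : ∀ k j : ℕ, e (((q + k)/n : ℚ) : QZ) * e (((p + j)/n : ℚ) : QZ)
      = e (((q + p + k + j : ℚ)/n : ℚ) : QZ) := by
    intro k j
    rw [e_mul]
    congr 1
    show (((q + k)/n + (p + j)/n : ℚ) : QZ) = _
    congr 1
    field_simp
    ring
  have hinner : ∀ k : ℕ, ∑ j ∈ Finset.range n, e (((q + p + k + j : ℚ)/n : ℚ) : QZ)
      = F n (q + p) := by
    intro k
    have : (q + p + (k:ℚ)) = (q + p) + (k:ℕ) := by ring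
    calc ∑ j ∈ Finset.range n, e (((q + p + k + j : ℚ)/n : ℚ) : QZ)
        = F n (q + p + k) := rfl
      _ = F n (q + p) := by rw [this, F_shift_nat n hn]
  calc ∑ k ∈ Finset.range n, ∑ j ∈ Finset.range n,
        e (((q + k)/n : ℚ) : QZ) * e (((p + j)/n : ℚ) : QZ)
      = ∑ k ∈ Finset.range n, F n (q + p) := by
        refine Finset.sum_congr rfl fun k _ => ?_
        rw [Finset.sum_congr rfl fun j _ => hterm k j, hinner k]
    _ = n • F n (q + p) := by rw [Finset.sum_const, Finset.card_range]

theorem rho_mul_rho (n : ℕ) (hn : 0 < n)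
    (ρn : RQZ →ₗ[ℤ] RQZ) (hρn : IsRho n ρn) :
    ∀ x y : RQZ, ρn x * ρn y = n • ρn (x * y) := by
  intro x y
  induction x using AddMonoidAlgebra.induction_linear with
  | zero => simp
  | add f g hf hg => simp only [map_add, add_mul, hf, hg, smul_add]
  | single a b =>
    induction y using AddMonoidAlgebra.induction_linear with
    | zero => simp
    | add f g hf hg => simp only [map_add, mul_add, hf, hg, smul_add]
    | single a' b' =>
      have h1 : (AddMonoidAlgebra.single a b : RQZ) = b • e a := by
        simp [e, AddMonoidAlgebra.smul_single]
      have h2 : (AddMonoidAlgebra.single a' b' : RQZ) = b' • e a' := by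
        simp [e, AddMonoidAlgebra.smul_single]
      rw [h1, h2, map_smul, map_smul, smul_mul_assoc, mul_smul_comm,
        smul_mul_assoc, mul_smul_comm, map_smul, map_smul,
        key_basis n hn ρn hρn a a']
      rw [smul_comm (n : ℕ) b, smul_comm (n : ℕ) b']
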